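/- Suppose f : Λ → ℤ where Λ is a finite abelian group, f(−γ) = f(γ), and for some positive integer N we have N·∑_γ f(γ) ≡ 0 (mod 24). If gcd(N, 8) < 8, then f(0) + ∑_{γ=−γ, γ≠0} f(γ) is even. -/
import Mathlib


/-- If `f` is negation-invariant on a finite abelian group, `N · ∑ f ≡ 0 (mod 24)` for some
positive `N` with `gcd(N,8) < 8`, then `f(0) + ∑_{γ = −γ, γ ≠ 0} f(γ)` is even. -/
theorem stmt_14 (Λ : Type*) [AddCommGroup Λ] [Fintype Λ] [DecidableEq Λ]
    (f : Λ → ℤ) (hsym : ∀ γ : Λ, f (-γ) = f γ)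
    (N : ℕ) (hN : 0 < N) (hcong : (24 : ℤ) ∣ (N : ℤ) * ∑ γ : Λ, f γ)
    (hgcd : Nat.gcd N 8 < 8) :
    Even (f 0 + ∑ γ ∈ Finset.univ.filter (fun γ : Λ => γ = -γ ∧ γ ≠ 0), f γ) := by
  set S := ∑ γ : Λ, f γ with hSdef
  -- Step 1: S is even
  have hSeven : Even S := by
    by_contra hodd
    have hodd' : Odd S := Int.not_even_iff_odd.mp hodd
    have h8 : (8 : ℤ) ∣ (N : ℤ) * S := dvd_trans ⟨3, by norm_num⟩ hcong
    have hc2 : IsCoprime (2 : ℤ) S :=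
      (Int.prime_two.coprime_iff_not_dvd).mpr (by
        rw [Int.two_dvd_ne_zero]
        exact Int.odd_iff.mp hodd')
    have hc8 : IsCoprime (8 : ℤ) S := by
      have h3 : IsCoprime ((2 : ℤ) ^ 3) S := hc2.pow_left
      norm_num at h3
      exact h3
    have h8N : (8 : ℤ) ∣ (N : ℤ) := hc8.dvd_of_dvd_mul_right h8
    have h8N' : (8 : ℕ) ∣ N := by exact_mod_cast h8N
    have : (8 : ℕ) ∣ Nat.gcd N 8 := Nat.dvd_gcd h8N' dvd_rfl
    have := Nat.le_of_dvd (Nat.gcd_pos_of_pos_right _ (by norm_num)) this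
    omega
  -- Step 2: parity transfer via ZMod 2
  have hiff : ∀ x : ℤ, Even x ↔ (2 : ℤ) ∣ x :=
    fun x => ⟨fun ⟨r, hr⟩ => ⟨r, by omega⟩, fun ⟨r, hr⟩ => ⟨r, by omega⟩⟩
  rw [hiff, show (2 : ℤ) = ((2 : ℕ) : ℤ) by norm_num,
    ← ZMod.intCast_zmod_eq_zero_iff_dvd]
  have hS0 : ((S : ℤ) : ZMod 2) = 0 := by
    rw [ZMod.intCast_zmod_eq_zero_iff_dvd]
    exact_mod_cast (hiff S).mp hSeven
  have hsplit : (∑ γ ∈ Finset.univ.filter (fun γ : Λ => γ = -γ), ((f γ : ZMod 2)))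
      + (∑ γ ∈ Finset.univ.filter (fun γ : Λ => ¬ γ = -γ), ((f γ : ZMod 2)))
      = ((S : ℤ) : ZMod 2) := by
    rw [hSdef]
    push_cast
    exact Finset.sum_filter_add_sum_filter_not _ _ _
  have hpair : (∑ γ ∈ Finset.univ.filter (fun γ : Λ => ¬ γ = -γ), ((f γ : ZMod 2))) = 0 := by
    apply Finset.sum_involution (fun γ _ => -γ)
    · intro a ha
      have h2 : ((f a : ZMod 2)) + ((f (-a) : ZMod 2)) = 2 * (f a : ZMod 2) := by
        rw [hsym]; ring
      rw [h2, show ((2 : ZMod 2) = 0) from by decide, zero_mul]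
    · intro a ha _
      simp only [Finset.mem_filter, Finset.mem_univ, true_and] at ha
      intro h
      exact ha h.symm
    · intro a ha
      exact neg_neg a
    · intro a ha
      simp only [Finset.mem_filter, Finset.mem_univ, true_and] at ha ⊢
      simp only [neg_neg]
      intro h
      exact ha h.symm
  have hinsert : (Finset.univ.filter (fun γ : Λ => γ = -γ))
      = insert (0 : Λ) (Finset.univ.filter (fun γ : Λ => γ = -γ ∧ γ ≠ 0)) := by
    ext γ
    simp only [Finset.mem_filter, Finset.mem_insert, Finset.mem_univ, true_and]
    by_cases h : γ = 0 <;> simp [h]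
  have hdiag : (∑ γ ∈ Finset.univ.filter (fun γ : Λ => γ = -γ), ((f γ : ZMod 2)))
      = (f 0 : ZMod 2) + ∑ γ ∈ Finset.univ.filter (fun γ : Λ => γ = -γ ∧ γ ≠ 0), ((f γ : ZMod 2)) := by
    rw [hinsert, Finset.sum_insert (by simp)]
  push_cast
  rw [← hS0, ← hsplit, hpair, hdiag]
  ring
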